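/- arXiv:1301.2157 — 2 statements merged into one kernel-verified Lean document; each statement's English description precedes it below -/
import Mathlib

section
/- Let n ≥ k ≥ 1 be natural numbers, let ℓ = aX + bY be a nonzero linear form in ℂ[X,Y], and let m = cX + dY be a nonzero linear form non-proportional to ℓ. Then the kernel of the operator (b ∂_X − a ∂_Y)^k on the space of binary forms of degree n equals the ℂ-span of {ℓ^{n−j} m^j : 0 ≤ j ≤ k−1}, a subspace of dimension k. -/
open MvPolynomial

/-- The linear form `a*X + b*Y` in `ℂ[X,Y]`. -/
noncomputable def lin (a b : ℂ) : MvPolynomial (Fin 2) ℂ :=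
  MvPolynomial.C a * MvPolynomial.X 0 + MvPolynomial.C b * MvPolynomial.X 1

/-- The partial derivative `∂_X` (for `i = 0`) or `∂_Y` (for `i = 1`) as a linear map. -/
noncomputable def pd (i : Fin 2) :
    MvPolynomial (Fin 2) ℂ →ₗ[ℂ] MvPolynomial (Fin 2) ℂ :=
  (MvPolynomial.pderiv i).toLinearMap

/-- The apolarity operator `q(∂) = Σ q_{ij} ∂_X^i ∂_Y^j`, as a linear map on `ℂ[X,Y]`. -/
noncomputable def apolarL (q : MvPolynomial (Fin 2) ℂ) :
    MvPolynomial (Fin 2) ℂ →ₗ[ℂ] MvPolynomial (Fin 2) ℂ :=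
  q.support.sum fun m => q.coeff m • (pd 0 ^ m 0 * pd 1 ^ m 1)

/-- The apolarity pairing `⟨q, p⟩`: the value of the constant polynomial `q(∂)p`. -/
noncomputable def pairing (q p : MvPolynomial (Fin 2) ℂ) : ℂ :=
  MvPolynomial.coeff 0 (apolarL q p)

theorem coeff_pderiv' {σ R : Type*} [CommRing R] [DecidableEq σ] (i : σ)
    (p : MvPolynomial σ R) (m : σ →₀ ℕ) :
    coeff m (pderiv i p) = (m i + 1 : ℕ) * coeff (m + Finsupp.single i 1) p := by
  induction p using MvPolynomial.induction_on' with
  | monomial s r =>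
    rw [pderiv_monomial, coeff_monomial, coeff_monomial]
    by_cases h : s = m + Finsupp.single i 1
    · subst h
      simp [Finsupp.add_apply, Finsupp.single_apply, mul_comm]
    · rw [if_neg h, mul_zero]
      split_ifs with h2
      · by_cases hs : s i = 0
        · simp [hs]
        · exfalso
          apply h
          rw [← h2, tsub_add_cancel_of_le]
          exact Finsupp.single_le_iff.mpr (Nat.one_le_iff_ne_zero.mpr hs)
      · rfl
  | add p q hp hq =>
    simp [hp, hq, mul_add]

theorem coeff_pd_pow (k : ℕ) (m : Fin 2 →₀ ℕ) :
    ∃ c : ℕ, 0 < c ∧ ∀ p : MvPolynomial (Fin 2) ℂ,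
      coeff m ((pd 1 ^ k) p) = c * coeff (m + Finsupp.single 1 k) p := by
  induction k with
  | zero => exact ⟨1, Nat.one_pos, fun p => by simp⟩
  | succ k ih =>
    obtain ⟨c, hc, hcoeff⟩ := ih
    refine ⟨c * (m 1 + k + 1), by positivity, fun p => ?_⟩
    have : (pd 1 ^ (k+1)) p = (pd 1 ^ k) (pd 1 p) := by
      rw [pow_succ]; rfl
    rw [this, hcoeff, show (pd 1) p = pderiv 1 p from rfl, coeff_pderiv' 1 p]
    have h1 : ((m + Finsupp.single 1 k) : Fin 2 →₀ ℕ) 1 = m 1 + k := by simp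
    have h2 : m + Finsupp.single 1 k + Finsupp.single 1 1 = m + Finsupp.single 1 (k+1) := by
      rw [add_assoc, Finsupp.single_add]
    rw [h1, h2]
    push_cast
    ring

theorem pd_pow_eq_zero_iff (k : ℕ) (p : MvPolynomial (Fin 2) ℂ) :
    (pd 1 ^ k) p = 0 ↔ ∀ m : Fin 2 →₀ ℕ, k ≤ m 1 → coeff m p = 0 := by
  constructor
  · intro h m hm
    set m' := m - Finsupp.single 1 k with hm'
    have hle : Finsupp.single 1 k ≤ m := Finsupp.single_le_iff.mpr hm
    have hmm : m' + Finsupp.single 1 k = m := tsub_add_cancel_of_le hle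
    obtain ⟨c, hc, hcoeff⟩ := coeff_pd_pow k m'
    have := hcoeff p
    rw [h, coeff_zero, hmm] at this
    have hcc : (c : ℂ) ≠ 0 := Nat.cast_ne_zero.mpr hc.ne'
    exact (mul_eq_zero.mp this.symm).resolve_left hcc
  · intro h
    apply MvPolynomial.ext
    intro m
    obtain ⟨c, hc, hcoeff⟩ := coeff_pd_pow k m
    rw [hcoeff, coeff_zero, h (m + Finsupp.single 1 k) (by simp), mul_zero]

theorem fin2_degree (m : Fin 2 →₀ ℕ) : m.degree = m 0 + m 1 := by
  rw [Finsupp.degree_apply, Finset.sum_subset (Finset.subset_univ m.support)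
    (fun i _ hi => Finsupp.notMem_support_iff.mp hi), Fin.sum_univ_two]

theorem fin2_eq (m : Fin 2 →₀ ℕ) : m = Finsupp.single 0 (m 0) + Finsupp.single 1 (m 1) := by
  ext i
  fin_cases i <;> simp [Finsupp.single_apply]

theorem XY_pow (i j : ℕ) :
    (X 0 : MvPolynomial (Fin 2) ℂ) ^ i * X 1 ^ j
      = monomial (Finsupp.single 0 i + Finsupp.single 1 j) 1 := by
  simp [X_pow_eq_monomial, monomial_mul]

theorem claimA (n k : ℕ) (hkn : k ≤ n) :
    MvPolynomial.homogeneousSubmodule (Fin 2) ℂ n ⊓ LinearMap.ker (pd 1 ^ k) =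
      Submodule.span ℂ
        (Set.range fun j : Fin k =>
          (X 0 : MvPolynomial (Fin 2) ℂ) ^ (n - (j : ℕ)) * X 1 ^ (j : ℕ)) := by
  apply le_antisymm
  · rintro p hp
    rw [Submodule.mem_inf, mem_homogeneousSubmodule, LinearMap.mem_ker,
      pd_pow_eq_zero_iff] at hp
    obtain ⟨hhom, hker⟩ := hp
    rw [← MvPolynomial.support_sum_monomial_coeff p]
    apply Submodule.sum_mem
    intro m hmem
    have hc : coeff m p ≠ 0 := mem_support_iff.mp hmem
    have hdeg : m 0 + m 1 = n := by
      rw [← fin2_degree, Finsupp.degree_eq_weight_one]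
      exact hhom hc
    have hlt : m 1 < k := by
      by_contra hge
      exact hc (hker m (le_of_not_gt hge))
    have : monomial m (coeff m p)
        = coeff m p • ((X 0 : MvPolynomial (Fin 2) ℂ) ^ (n - m 1) * X 1 ^ (m 1)) := by
      rw [XY_pow]
      have h0 : m 0 = n - m 1 := by omega
      rw [smul_monomial, smul_eq_mul, mul_one, ← h0, ← fin2_eq]
    rw [this]
    exact Submodule.smul_mem _ _ (Submodule.subset_span ⟨⟨m 1, hlt⟩, rfl⟩)
  · rw [Submodule.span_le]
    rintro _ ⟨j, rfl⟩
    simp only [SetLike.mem_coe, Submodule.mem_inf, LinearMap.mem_ker]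
    constructor
    · rw [mem_homogeneousSubmodule, XY_pow]
      apply isHomogeneous_monomial
      rw [fin2_degree]
      have := j.2
      simp [Finsupp.single_apply]
      omega
    · rw [pd_pow_eq_zero_iff]
      intro m hm
      rw [XY_pow, coeff_monomial]
      rw [if_neg]
      intro h
      rw [← h] at hm
      simp at hm
      omega

noncomputable def chg (a b c d : ℂ) :
    MvPolynomial (Fin 2) ℂ →ₐ[ℂ] MvPolynomial (Fin 2) ℂ :=
  aeval ![lin a b, lin c d]

theorem chg_X0 (a b c d : ℂ) : chg a b c d (X 0) = lin a b := by simp [chg]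
theorem chg_X1 (a b c d : ℂ) : chg a b c d (X 1) = lin c d := by simp [chg]

theorem chg_lin (a b c d x y : ℂ) :
    chg a b c d (lin x y) = lin (x*a + y*c) (x*b + y*d) := by
  simp only [lin, map_add, map_mul, chg, aeval_C, aeval_X]
  simp [Matrix.cons_val_zero, Matrix.cons_val_one, lin, map_add]
  ring

theorem lin_X0 : lin 1 0 = X 0 := by simp [lin]
theorem lin_X1 : lin 0 1 = X 1 := by simp [lin]

theorem chg_comp (a b c d : ℂ) (hΔ : a * d - b * c ≠ 0) :
    (chg (d/(a*d-b*c)) (-b/(a*d-b*c)) (-c/(a*d-b*c)) (a/(a*d-b*c))).comp (chg a b c d)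
      = AlgHom.id ℂ _ := by
  apply MvPolynomial.algHom_ext
  intro i
  simp only [AlgHom.comp_apply, AlgHom.id_apply]
  fin_cases i
  · show (chg (d/(a*d-b*c)) (-b/(a*d-b*c)) (-c/(a*d-b*c)) (a/(a*d-b*c)))
      ((chg a b c d) (X 0)) = X 0
    rw [chg_X0, chg_lin]
    have h1 : a * (d/(a*d-b*c)) + b * (-c/(a*d-b*c)) = 1 := by field_simp; ring
    have h2 : a * (-b/(a*d-b*c)) + b * (a/(a*d-b*c)) = 0 := by field_simp; ring
    rw [h1, h2, lin_X0]
  · show (chg (d/(a*d-b*c)) (-b/(a*d-b*c)) (-c/(a*d-b*c)) (a/(a*d-b*c)))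
      ((chg a b c d) (X 1)) = X 1
    rw [chg_X1, chg_lin]
    have h1 : c * (d/(a*d-b*c)) + d * (-c/(a*d-b*c)) = 0 := by field_simp; ring
    have h2 : c * (-b/(a*d-b*c)) + d * (a/(a*d-b*c)) = 1 := by
      rw [mul_div_assoc', mul_div_assoc', ← add_div, div_eq_one_iff_eq hΔ]; ring
    rw [h1, h2, lin_X1]

theorem chg_comp' (a b c d : ℂ) (hΔ : a * d - b * c ≠ 0) :
    (chg a b c d).comp (chg (d/(a*d-b*c)) (-b/(a*d-b*c)) (-c/(a*d-b*c)) (a/(a*d-b*c)))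
      = AlgHom.id ℂ _ := by
  apply MvPolynomial.algHom_ext
  intro i
  simp only [AlgHom.comp_apply, AlgHom.id_apply]
  fin_cases i
  · show (chg a b c d)
      ((chg (d/(a*d-b*c)) (-b/(a*d-b*c)) (-c/(a*d-b*c)) (a/(a*d-b*c))) (X 0)) = X 0
    rw [chg_X0, chg_lin]
    have h1 : (d/(a*d-b*c)) * a + (-b/(a*d-b*c)) * c = 1 := by
      rw [div_mul_eq_mul_div, div_mul_eq_mul_div, ← add_div, div_eq_one_iff_eq hΔ]; ring
    have h2 : (d/(a*d-b*c)) * b + (-b/(a*d-b*c)) * d = 0 := by field_simp; ring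
    rw [h1, h2, lin_X0]
  · show (chg a b c d)
      ((chg (d/(a*d-b*c)) (-b/(a*d-b*c)) (-c/(a*d-b*c)) (a/(a*d-b*c))) (X 1)) = X 1
    rw [chg_X1, chg_lin]
    have h1 : (-c/(a*d-b*c)) * a + (a/(a*d-b*c)) * c = 0 := by field_simp; ring
    have h2 : (-c/(a*d-b*c)) * b + (a/(a*d-b*c)) * d = 1 := by
      rw [div_mul_eq_mul_div, div_mul_eq_mul_div, ← add_div, div_eq_one_iff_eq hΔ]; ring
    rw [h1, h2, lin_X1]

theorem chg_isHomogeneous (a b c d : ℂ) {n : ℕ} {p : MvPolynomial (Fin 2) ℂ}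
    (hp : p.IsHomogeneous n) : (chg a b c d p).IsHomogeneous n := by
  have := hp.aeval (g := ![lin a b, lin c d]) (n := 1) ?_
  · simpa [chg] using this
  · intro i
    fin_cases i <;>
      exact (isHomogeneous_C_mul_X _ _).add (isHomogeneous_C_mul_X _ _)

theorem pd_apply (i : Fin 2) (f : MvPolynomial (Fin 2) ℂ) : pd i f = pderiv i f := rfl

theorem D_mul (a b : ℂ) (f g : MvPolynomial (Fin 2) ℂ) :
    (b • pd 0 - a • pd 1) (f * g)
      = ((b • pd 0 - a • pd 1) f) * g + f * ((b • pd 0 - a • pd 1) g) := by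
  simp only [LinearMap.sub_apply, LinearMap.smul_apply, pd_apply, pderiv_mul, smul_add,
    sub_mul, mul_sub, smul_mul_assoc, mul_smul_comm]
  abel

theorem D_lin (a b c d : ℂ) :
    (b • pd 0 - a • pd 1) (lin c d) = C (b*c - a*d) := by
  simp only [LinearMap.sub_apply, LinearMap.smul_apply, pd_apply, lin,
    map_add, pderiv_C_mul, pderiv_X_self, pderiv_X_of_ne (show (0:Fin 2) ≠ 1 by decide),
    pderiv_X_of_ne (show (1:Fin 2) ≠ 0 by decide), smul_eq_C_mul, C_sub, C_mul]
  ring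

theorem chain (a b c d : ℂ) (p : MvPolynomial (Fin 2) ℂ) :
    (b • pd 0 - a • pd 1) (chg a b c d p)
      = (b*c - a*d) • chg a b c d (pd 1 p) := by
  induction p using MvPolynomial.induction_on with
  | C r =>
    simp [pd, chg, aeval_C]
  | add p q hp hq =>
    simp only [map_add, hp, hq, smul_add]
  | mul_X p i hp =>
    have hD1 : pd 1 (p * X i) = pd 1 p * X i + p * pd 1 (X i) := by
      simp only [pd_apply, pderiv_mul]
    have hc : chg a b c d (p * X i) = chg a b c d p * chg a b c d (X i) := map_mul _ _ _
    rw [hc, D_mul, hD1, map_add, map_mul, map_mul, smul_add, hp]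
    fin_cases i
    · show (b * c - a * d) • (chg a b c d) ((pd 1) p) * (chg a b c d) (X 0) +
          (chg a b c d) p * (b • pd 0 - a • pd 1) ((chg a b c d) (X 0)) =
        (b * c - a * d) • ((chg a b c d) ((pd 1) p) * (chg a b c d) (X 0)) +
          (b * c - a * d) • ((chg a b c d) p * (chg a b c d) ((pd 1) (X 0)))
      have h0 : (b • pd 0 - a • pd 1) (chg a b c d (X 0)) = 0 := by
        rw [chg_X0, D_lin]; ring_nf; simp
      have h1 : pd 1 (X 0 : MvPolynomial (Fin 2) ℂ) = 0 := by
        simp [pd_apply, pderiv_X_of_ne (show (0:Fin 2) ≠ 1 by decide)]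
      rw [h0, h1]
      simp [smul_mul_assoc]
    · show (b * c - a * d) • (chg a b c d) ((pd 1) p) * (chg a b c d) (X 1) +
          (chg a b c d) p * (b • pd 0 - a • pd 1) ((chg a b c d) (X 1)) =
        (b * c - a * d) • ((chg a b c d) ((pd 1) p) * (chg a b c d) (X 1)) +
          (b * c - a * d) • ((chg a b c d) p * (chg a b c d) ((pd 1) (X 1)))
      have h0 : (b • pd 0 - a • pd 1) (chg a b c d (X 1)) = C (b*c - a*d) := by
        rw [chg_X1, D_lin]
      have h1 : pd 1 (X 1 : MvPolynomial (Fin 2) ℂ) = 1 := by simp [pd_apply]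
      rw [h0, h1, map_one, mul_one, smul_mul_assoc]
      congr 1
      rw [smul_eq_C_mul, mul_comm]

theorem chain_pow (a b c d : ℂ) (k : ℕ) (p : MvPolynomial (Fin 2) ℂ) :
    ((b • pd 0 - a • pd 1) ^ k) (chg a b c d p)
      = (b*c - a*d) ^ k • chg a b c d ((pd 1 ^ k) p) := by
  induction k generalizing p with
  | zero => simp
  | succ k ih =>
    have e1 : ((b • pd 0 - a • pd 1) ^ (k+1)) (chg a b c d p)
        = ((b • pd 0 - a • pd 1) ^ k) ((b • pd 0 - a • pd 1) (chg a b c d p)) := by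
      rw [pow_succ]; rfl
    have e2 : (pd 1 ^ (k+1)) p = (pd 1 ^ k) (pd 1 p) := by rw [pow_succ]; rfl
    rw [e1, chain, map_smul, ih, e2, smul_smul, pow_succ]
    ring_nf

theorem smul_lin (t a b : ℂ) : t • lin a b = lin (t*a) (t*b) := by
  simp [lin, smul_add, smul_eq_C_mul, C_mul]
  ring

/-- The kernel of (b ∂_X − a ∂_Y)^k on degree-n binary forms is spanned by
the forms ℓ^(n−j) * m^j for 0 ≤ j ≤ k − 1, a subspace of dimension k. -/
theorem kernel_of_power_of_derivation
    (n k : ℕ) (hk : 1 ≤ k) (hkn : k ≤ n) (a b c d : ℂ)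
    (hl : (a, b) ≠ (0, 0)) (hm : (c, d) ≠ (0, 0))
    (hprop : ∀ t : ℂ, lin c d ≠ t • lin a b) :
    MvPolynomial.homogeneousSubmodule (Fin 2) ℂ n ⊓
        LinearMap.ker ((b • pd 0 - a • pd 1) ^ k) =
      Submodule.span ℂ
        (Set.range fun j : Fin k => lin a b ^ (n - (j : ℕ)) * lin c d ^ (j : ℕ)) ∧
    Module.finrank ℂ
      ↥(Submodule.span ℂ
        (Set.range fun j : Fin k => lin a b ^ (n - (j : ℕ)) * lin c d ^ (j : ℕ))) = k := by
  -- the determinant is nonzero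
  have hΔ : a * d - b * c ≠ 0 := by
    intro h
    by_cases ha : a = 0
    · have hb : b ≠ 0 := by
        intro hb; exact hl (by rw [ha, hb])
      have hc : c = 0 := by
        rw [ha, zero_mul, zero_sub, neg_eq_zero, mul_eq_zero] at h
        exact h.resolve_left hb
      exact hprop (d/b) (by rw [smul_lin, hc, ha, mul_zero, div_mul_cancel₀ _ hb])
    · exact hprop (c/a) (by
        rw [smul_lin, div_mul_cancel₀ _ ha]
        congr 1
        field_simp
        linear_combination h)
  set Δ := a * d - b * c with hΔdef
  set φ := chg a b c d with hφdef
  set ψ := chg (d/Δ) (-b/Δ) (-c/Δ) (a/Δ) with hψdef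
  have hψφ : ∀ p, ψ (φ p) = p := fun p => by
    have := DFunLike.congr_fun (chg_comp a b c d hΔ) p
    simpa [AlgHom.comp_apply] using this
  have hφψ : ∀ p, φ (ψ p) = p := fun p => by
    have := DFunLike.congr_fun (chg_comp' a b c d hΔ) p
    simpa [AlgHom.comp_apply] using this
  set φL := φ.toLinearMap with hφLdef
  have hφLapp : ∀ p, φL p = φ p := fun _ => rfl
  have hinj : Function.Injective φL := fun x y h => by
    have h2 : ψ (φL x) = ψ (φL y) := congrArg ψ h
    rw [hφLapp, hφLapp, hψφ, hψφ] at h2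
    exact h2
  have he : b * c - a * d ≠ 0 := by
    intro h; exact hΔ (by linear_combination -h)
  -- the image of the homogeneous submodule
  have hhom : Submodule.map φL (MvPolynomial.homogeneousSubmodule (Fin 2) ℂ n)
      = MvPolynomial.homogeneousSubmodule (Fin 2) ℂ n := by
    apply le_antisymm
    · rintro _ ⟨p, hp, rfl⟩
      rw [SetLike.mem_coe, mem_homogeneousSubmodule] at *
      exact chg_isHomogeneous a b c d hp
    · intro p hp
      rw [mem_homogeneousSubmodule] at hp
      refine ⟨ψ p, chg_isHomogeneous _ _ _ _ hp, ?_⟩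
      rw [hφLapp]
      exact hφψ p
  -- the image of the kernel
  have hker : Submodule.map φL (LinearMap.ker (pd 1 ^ k))
      = LinearMap.ker ((b • pd 0 - a • pd 1) ^ k) := by
    apply le_antisymm
    · rintro _ ⟨p, hp, rfl⟩
      rw [SetLike.mem_coe, LinearMap.mem_ker] at *
      rw [hφLapp, chain_pow, hp, map_zero, smul_zero]
    · intro p hp
      rw [LinearMap.mem_ker] at hp
      refine ⟨ψ p, ?_, by rw [hφLapp]; exact hφψ p⟩
      rw [SetLike.mem_coe, LinearMap.mem_ker]
      have h0 : ((b • pd 0 - a • pd 1) ^ k) (φ (ψ p)) = 0 := by rw [hφψ]; exact hp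
      rw [chain_pow, smul_eq_zero] at h0
      rcases h0 with h0 | h0
      · exact absurd h0 (pow_ne_zero k he)
      · have : φ ((pd 1 ^ k) (ψ p)) = φ 0 := by rw [map_zero]; exact h0
        exact hinj this
  -- the image of the span
  have hspan : Submodule.map φL
      (Submodule.span ℂ (Set.range fun j : Fin k =>
        (X 0 : MvPolynomial (Fin 2) ℂ) ^ (n - (j : ℕ)) * X 1 ^ (j : ℕ)))
      = Submodule.span ℂ
        (Set.range fun j : Fin k => lin a b ^ (n - (j : ℕ)) * lin c d ^ (j : ℕ)) := by
    have hfg : ⇑φL ∘ (fun j : Fin k =>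
        (X 0 : MvPolynomial (Fin 2) ℂ) ^ (n - (j : ℕ)) * X 1 ^ (j : ℕ))
        = fun j : Fin k => lin a b ^ (n - (j : ℕ)) * lin c d ^ (j : ℕ) := by
      funext j
      show φL ((X 0 : MvPolynomial (Fin 2) ℂ) ^ (n - (j : ℕ)) * X 1 ^ (j : ℕ))
        = lin a b ^ (n - (j : ℕ)) * lin c d ^ (j : ℕ)
      rw [hφLapp, map_mul, map_pow, map_pow, chg_X0, chg_X1]
    rw [Submodule.map_span, ← Set.range_comp, hfg]
  have hmain : MvPolynomial.homogeneousSubmodule (Fin 2) ℂ n ⊓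
      LinearMap.ker ((b • pd 0 - a • pd 1) ^ k) =
      Submodule.span ℂ
        (Set.range fun j : Fin k => lin a b ^ (n - (j : ℕ)) * lin c d ^ (j : ℕ)) := by
    rw [← hhom, ← hker, ← Submodule.map_inf _ hinj, claimA n k hkn, hspan]
  refine ⟨hmain, ?_⟩
  -- the dimension count
  have hli : LinearIndependent ℂ (fun j : Fin k =>
      (X 0 : MvPolynomial (Fin 2) ℂ) ^ (n - (j : ℕ)) * X 1 ^ (j : ℕ)) := by
    have hg : (fun j : Fin k =>
        (X 0 : MvPolynomial (Fin 2) ℂ) ^ (n - (j : ℕ)) * X 1 ^ (j : ℕ))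
        = (fun s => (monomial s (1:ℂ))) ∘
          (fun j : Fin k => Finsupp.single 0 (n - (j:ℕ)) + Finsupp.single 1 (j:ℕ)) := by
      funext j
      exact XY_pow _ _
    rw [hg]
    have hμ : Function.Injective
        (fun j : Fin k => Finsupp.single (0 : Fin 2) (n - (j:ℕ)) + Finsupp.single 1 (j:ℕ)) := by
      intro i j hij
      have := congrArg (fun f : Fin 2 →₀ ℕ => f 1) hij
      simp [Finsupp.single_apply] at this
      exact Fin.ext this
    have hbl := (MvPolynomial.basisMonomials (Fin 2) ℂ).linearIndependent
    rw [coe_basisMonomials] at hbl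
    exact hbl.comp _ hμ
  have hli2 : LinearIndependent ℂ
      (fun j : Fin k => lin a b ^ (n - (j : ℕ)) * lin c d ^ (j : ℕ)) := by
    have : (fun j : Fin k => lin a b ^ (n - (j : ℕ)) * lin c d ^ (j : ℕ))
        = φL ∘ (fun j : Fin k =>
          (X 0 : MvPolynomial (Fin 2) ℂ) ^ (n - (j : ℕ)) * X 1 ^ (j : ℕ)) := by
      funext j
      simp only [Function.comp_apply]
      rw [hφLapp, map_mul, map_pow, map_pow, chg_X0, chg_X1]
    rw [this]
    exact hli.map' φL (LinearMap.ker_eq_bot.mpr hinj)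
  rw [finrank_span_eq_card hli2, Fintype.card_fin]
end

section
/- Let n, k be natural numbers with 2k ≤ n + 1. Let ℓ₁, …, ℓ_k and ℓ'₁, …, ℓ'_k be nonzero linear forms in ℂ[X,Y] such that all 2k of them are pairwise non-proportional. Then the intersection of the ℂ-span of {ℓ₁ⁿ, …, ℓ_kⁿ} with the ℂ-span of {ℓ'₁ⁿ, …, ℓ'_kⁿ} inside the space of binary forms of degree n is the zero subspace. -/
open MvPolynomial

lemma Dop_pow (a b a' b' : ℂ) (m : ℕ) :
    (b • pd 0 - a • pd 1) (lin a' b' ^ (m + 1)) =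
      (((m + 1 : ℕ) : ℂ) * (a' * b - b' * a)) • lin a' b' ^ m := by
  have h0 : pderiv (0 : Fin 2) (lin a' b') = C a' := by simp [lin]
  have h1 : pderiv (1 : Fin 2) (lin a' b') = C b' := by simp [lin]
  have e0 := Derivation.leibniz_pow (pderiv (0 : Fin 2)) (lin a' b') (m + 1)
  have e1 := Derivation.leibniz_pow (pderiv (1 : Fin 2)) (lin a' b') (m + 1)
  rw [h0] at e0; rw [h1] at e1
  simp only [LinearMap.sub_apply, LinearMap.smul_apply, pd, Derivation.coeFn_coe]
  rw [e0, e1]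
  simp only [Nat.add_sub_cancel, smul_eq_C_mul, nsmul_eq_mul, smul_eq_mul]
  simp only [map_mul, map_sub, map_add, map_natCast]
  push_cast
  ring

lemma powers_li (n : ℕ) : ∀ (ι : Type) [Fintype ι] (a b : ι → ℂ),
    Fintype.card ι ≤ n + 1 → (∀ s, lin (a s) (b s) ≠ 0) →
    (∀ s t, s ≠ t → a s * b t - a t * b s ≠ 0) →
    LinearIndependent ℂ fun s => lin (a s) (b s) ^ n := by
  induction n with
  | zero =>
    intro ι _ a b hcard hne hdet
    rw [Fintype.linearIndependent_iff]
    intro g hg s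
    have huniv : (Finset.univ : Finset ι) = {s} := by
      apply Finset.eq_singleton_iff_unique_mem.mpr
      exact ⟨Finset.mem_univ s, fun t _ => Fintype.card_le_one_iff.mp hcard t s⟩
    rw [huniv, Finset.sum_singleton, pow_zero, smul_eq_C_mul, mul_one] at hg
    exact (MvPolynomial.C_eq_zero).mp hg
  | succ n IH =>
    intro ι _ a b hcard hne hdet
    rcases isEmpty_or_nonempty ι with hE | hNE
    · exact linearIndependent_empty_type
    obtain ⟨t0⟩ := hNE
    classical
    rw [Fintype.linearIndependent_iff]
    intro g hg
    set D := (b t0 • pd 0 - a t0 • pd 1) with hD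
    set g' : ι → ℂ := fun s => g s * (((n + 1 : ℕ) : ℂ) * (a s * b t0 - b s * a t0)) with hg'
    have hsum : ∑ s, g' s • lin (a s) (b s) ^ n = 0 := by
      have := congrArg D hg
      rw [map_sum, map_zero] at this
      rw [← this]
      apply Finset.sum_congr rfl
      intro s _
      rw [map_smul, Dop_pow, smul_smul, hg']
    -- the t0 term of hsum vanishes
    have ht0 : g' t0 = 0 := by
      have hz0 : a t0 * b t0 - b t0 * a t0 = 0 := by ring
      simp [hg', hz0]
    -- restrict to the subtype
    have hsub : ∑ s : {s : ι // s ≠ t0}, g' s.1 • lin (a s.1) (b s.1) ^ n = 0 := by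
      rw [← Finset.sum_subtype (Finset.univ.erase t0)
        (fun s => by simp [Finset.mem_erase]) (fun s => g' s • lin (a s) (b s) ^ n)]
      rw [← hsum, ← Finset.add_sum_erase _ _ (Finset.mem_univ t0), ht0, zero_smul, zero_add]
    have hli := IH {s : ι // s ≠ t0} (fun s => a s.1) (fun s => b s.1)
      (by
        have h2 : Fintype.card {s : ι // s ≠ t0} < Fintype.card ι :=
          Fintype.card_subtype_lt (x := t0) (by simp)
        omega)
      (fun s => hne s.1) (fun s t hst => hdet s.1 t.1 (fun h => hst (Subtype.ext h)))
    have hz : ∀ s : {s : ι // s ≠ t0}, g' s.1 = 0 :=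
      Fintype.linearIndependent_iff.mp hli (fun s => g' s.1) hsub
    have hgz : ∀ s : ι, s ≠ t0 → g s = 0 := by
      intro s hs
      have hthis := hz ⟨s, hs⟩
      rw [hg'] at hthis
      have hd : a s * b t0 - b s * a t0 ≠ 0 := by
        have := hdet s t0 hs
        intro hc; apply this; linear_combination hc
      have hn1 : ((n + 1 : ℕ) : ℂ) ≠ 0 := Nat.cast_ne_zero.mpr (Nat.succ_ne_zero n)
      rcases mul_eq_zero.mp hthis with h | h
      · exact h
      · rcases mul_eq_zero.mp h with h' | h'
        · exact absurd h' hn1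
        · exact absurd h' hd
    -- now the original relation reduces to the t0 term
    have ht0' : g t0 = 0 := by
      have : g t0 • lin (a t0) (b t0) ^ (n + 1) = 0 := by
        rw [← hg, ← Finset.add_sum_erase _ _ (Finset.mem_univ t0)]
        rw [Finset.sum_eq_zero, add_zero]
        intro s hs
        rw [hgz s (Finset.ne_of_mem_erase hs), zero_smul]
      rcases smul_eq_zero.mp this with h | h
      · exact h
      · exact absurd h (pow_ne_zero _ (hne t0))
    intro s
    by_cases hs : s = t0
    · rw [hs]; exact ht0'
    · exact hgz s hs

lemma lin_smul (c a b : ℂ) : c • lin a b = lin (c * a) (c * b) := by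
  simp [lin, smul_eq_C_mul]; ring

lemma lin_eq_zero_iff {a b : ℂ} : lin a b = 0 ↔ a = 0 ∧ b = 0 := by
  constructor
  · intro h
    constructor
    · have := congrArg (coeff (Finsupp.single 0 1)) h
      simpa [lin, coeff_X', Finsupp.single_eq_single_iff] using this
    · have := congrArg (coeff (Finsupp.single 1 1)) h
      simpa [lin, coeff_X', Finsupp.single_eq_single_iff] using this
  · rintro ⟨rfl, rfl⟩; simp [lin]

lemma prop_of_det {a b a' b' : ℂ} (h2 : lin a' b' ≠ 0)
    (hdet0 : a * b' - a' * b = 0) : ∃ c : ℂ, lin a b = c • lin a' b' := by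
  have hab : ¬(a' = 0 ∧ b' = 0) := fun h => h2 (lin_eq_zero_iff.mpr h)
  by_cases ha : a' = 0
  · have hb : b' ≠ 0 := fun h => hab ⟨ha, h⟩
    refine ⟨b / b', ?_⟩
    rw [lin_smul]
    have ha0 : a = 0 := by
      have hmul : a * b' = 0 := by rw [ha] at hdet0; linear_combination hdet0
      rcases mul_eq_zero.mp hmul with h | h
      · exact h
      · exact absurd h hb
    rw [ha0, ha, mul_zero, div_mul_cancel₀ _ hb]
  · refine ⟨a / a', ?_⟩
    rw [lin_smul, div_mul_cancel₀ _ ha]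
    congr 1
    field_simp
    linear_combination -hdet0

/-- For 2k ≤ n + 1, the spans of the n-th powers of two families of k linear forms,
all 2k of which are nonzero and pairwise non-proportional, intersect only in 0. -/
theorem secant_planes_zero_intersection
    (n k : ℕ) (h : 2 * k ≤ n + 1) (a b a' b' : Fin k → ℂ)
    (L : Fin k ⊕ Fin k → MvPolynomial (Fin 2) ℂ)
    (hL : L = Sum.elim (fun i => lin (a i) (b i)) (fun i => lin (a' i) (b' i)))
    (hne : ∀ s, L s ≠ 0)
    (hprop : ∀ s t, s ≠ t → ∀ c : ℂ, L s ≠ c • L t) :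
    Submodule.span ℂ (Set.range fun i : Fin k => L (Sum.inl i) ^ n) ⊓
      Submodule.span ℂ (Set.range fun i : Fin k => L (Sum.inr i) ^ n) = ⊥ := by
  set A : Fin k ⊕ Fin k → ℂ := Sum.elim a a' with hA
  set B : Fin k ⊕ Fin k → ℂ := Sum.elim b b' with hB
  have hLs : ∀ s, L s = lin (A s) (B s) := by
    rintro (i | i) <;> simp [hL, hA, hB]
  have hne' : ∀ s, lin (A s) (B s) ≠ 0 := fun s => hLs s ▸ hne s
  have hdet' : ∀ s t, s ≠ t → A s * B t - A t * B s ≠ 0 := by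
    intro s t hst h0
    obtain ⟨c, hc⟩ := prop_of_det (hne' t) h0
    refine hprop s t hst c ?_
    rw [hLs s, hLs t]
    exact hc
  have hcard : Fintype.card (Fin k ⊕ Fin k) ≤ n + 1 := by
    simp only [Fintype.card_sum, Fintype.card_fin]; omega
  have hli : LinearIndependent ℂ fun s : Fin k ⊕ Fin k => L s ^ n := by
    have hli0 := powers_li n (Fin k ⊕ Fin k) A B hcard hne' hdet'
    convert hli0 using 2 with s
    rw [hLs]
  have hd := (linearIndependent_sum.mp hli).2.2
  rw [disjoint_iff] at hd
  exact hd
end
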